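/- Let G be a connected finite simple graph on N ≥ 2 vertices whose complement Gᶜ is disconnected, let e be a pair of distinct non-adjacent vertices of G, and let G + e be the graph obtained by adding the edge e. Then the complement of G + e is still disconnected, the largest Laplacian eigenvalue is unchanged, λ_N(G + e) = λ_N(G) = N, the second smallest Laplacian eigenvalue does not decrease, λ₂(G + e) ≥ λ₂(G), and consequently the eigenratio does not decrease: λ₂(G + e)/λ_N(G + e) ≥ λ₂(G)/λ_N(G). -/

import Mathlib

open Matrix Polynomial

/-- The real Laplacian matrix of a simple graph on `Fin N`. -/
noncomputable def lapR {N : ℕ} (G : SimpleGraph (Fin N)) : Matrix (Fin N) (Fin N) ℝ :=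
  letI := Classical.decRel G.Adj
  G.lapMatrix ℝ

/-- The Laplacian eigenvalues of a simple graph on `Fin N`, listed in nondecreasing order
with multiplicity; `sortedLapEigs G i` is the `(i+1)`-st smallest Laplacian eigenvalue. -/
noncomputable def sortedLapEigs {N : ℕ} (G : SimpleGraph (Fin N)) : Fin N → ℝ :=
  letI := Classical.decRel G.Adj
  let f : Fin N → ℝ := (SimpleGraph.posSemidef_lapMatrix ℝ G).isHermitian.eigenvalues
  f ∘ Tuple.sort f


section Generic
variable {N : ℕ} {A : Matrix (Fin N) (Fin N) ℝ}

lemma euc_inner_eq_dot (a b : EuclideanSpace ℝ (Fin N)) :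
    (inner ℝ a b : ℝ) = (⇑a) ⬝ᵥ (⇑b) := by
  simp [PiLp.inner_apply, dotProduct, mul_comm]

lemma transpose_eq_of_herm (hA : A.IsHermitian) : Aᵀ = A := by
  have h := hA.symm
  rwa [Matrix.conjTranspose_eq_transpose_of_trivial] at h

lemma dot_symm_herm (hA : A.IsHermitian) (w x : Fin N → ℝ) :
    w ⬝ᵥ (A *ᵥ x) = (A *ᵥ w) ⬝ᵥ x := by
  rw [Matrix.dotProduct_mulVec]
  congr 1
  conv_lhs => rw [← transpose_eq_of_herm hA, Matrix.vecMul_transpose]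

lemma parseval (hA : A.IsHermitian) (x y : Fin N → ℝ) :
    x ⬝ᵥ y = ∑ i, (x ⬝ᵥ (⇑(hA.eigenvectorBasis i) : Fin N → ℝ))
      * ((⇑(hA.eigenvectorBasis i) : Fin N → ℝ) ⬝ᵥ y) := by
  have h := (hA.eigenvectorBasis).sum_inner_mul_inner
    ((WithLp.equiv 2 (Fin N → ℝ)).symm x) ((WithLp.equiv 2 (Fin N → ℝ)).symm y)
  simp only [euc_inner_eq_dot] at h
  exact h.symm

end Generic

section Generic2
variable {N : ℕ} {A : Matrix (Fin N) (Fin N) ℝ}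

lemma eig_dot (hA : A.IsHermitian) (i : Fin N) (x : Fin N → ℝ) :
    (⇑(hA.eigenvectorBasis i) : Fin N → ℝ) ⬝ᵥ (A *ᵥ x)
      = hA.eigenvalues i * ((⇑(hA.eigenvectorBasis i) : Fin N → ℝ) ⬝ᵥ x) := by
  rw [dot_symm_herm hA, hA.mulVec_eigenvectorBasis, smul_dotProduct]
  rfl

lemma quad_form_expand (hA : A.IsHermitian) (x : Fin N → ℝ) :
    x ⬝ᵥ (A *ᵥ x) = ∑ i, hA.eigenvalues i
      * ((⇑(hA.eigenvectorBasis i) : Fin N → ℝ) ⬝ᵥ x)^2 := by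
  rw [parseval hA x (A *ᵥ x)]
  congr 1; ext i
  rw [eig_dot hA, dotProduct_comm]
  ring

lemma norm_expand (hA : A.IsHermitian) (x : Fin N → ℝ) :
    x ⬝ᵥ x = ∑ i, ((⇑(hA.eigenvectorBasis i) : Fin N → ℝ) ⬝ᵥ x)^2 := by
  rw [parseval hA x x]
  congr 1; ext i
  rw [dotProduct_comm]
  ring

lemma exists_eig_index (hA : A.IsHermitian) {x : Fin N → ℝ} (hx : x ≠ 0) {c : ℝ}
    (h : A *ᵥ x = c • x) : ∃ i, hA.eigenvalues i = c := by
  by_contra hc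
  push_neg at hc
  have hzero : ∀ i, (⇑(hA.eigenvectorBasis i) : Fin N → ℝ) ⬝ᵥ x = 0 := by
    intro i
    have h1 := eig_dot hA i x
    rw [h, dotProduct_smul] at h1
    have : (c - hA.eigenvalues i) * ((⇑(hA.eigenvectorBasis i) : Fin N → ℝ) ⬝ᵥ x) = 0 := by
      have : (c • ((⇑(hA.eigenvectorBasis i) : Fin N → ℝ) ⬝ᵥ x)) =
        hA.eigenvalues i * ((⇑(hA.eigenvectorBasis i) : Fin N → ℝ) ⬝ᵥ x) := h1
      simp only [smul_eq_mul] at this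
      linarith
    rcases mul_eq_zero.mp this with h' | h'
    · exact absurd (by linarith : hA.eigenvalues i = c) (hc i)
    · exact h'
  have : x ⬝ᵥ x = 0 := by
    rw [norm_expand hA x]
    simp [hzero]
  exact hx (by simpa using dotProduct_self_eq_zero.mp this)

lemma dot_self_pos {x : Fin N → ℝ} (hx : x ≠ 0) : 0 < x ⬝ᵥ x := by
  have h := Matrix.dotProduct_self_star_pos_iff.mpr hx
  simpa using h

end Generic2

section GraphLemmas
variable {N : ℕ}

noncomputable def lapR' {N : ℕ} (G : SimpleGraph (Fin N)) : Matrix (Fin N) (Fin N) ℝ :=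
  letI := Classical.decRel G.Adj
  G.lapMatrix ℝ

lemma lapR'_posSemidef (G : SimpleGraph (Fin N)) : (lapR' G).PosSemidef := by
  letI := Classical.decRel G.Adj
  exact SimpleGraph.posSemidef_lapMatrix ℝ G

lemma quad_nonneg (G : SimpleGraph (Fin N)) (x : Fin N → ℝ) :
    0 ≤ x ⬝ᵥ (lapR' G *ᵥ x) := by
  have h := (lapR'_posSemidef G).dotProduct_mulVec_nonneg x
  simpa using h

lemma quad_mono {G H : SimpleGraph (Fin N)} (hGH : G ≤ H) (x : Fin N → ℝ) :
    x ⬝ᵥ (lapR' G *ᵥ x) ≤ x ⬝ᵥ (lapR' H *ᵥ x) := by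
  letI instG := Classical.decRel G.Adj
  letI instH := Classical.decRel H.Adj
  have hG : x ⬝ᵥ (lapR' G *ᵥ x)
      = (∑ i : Fin N, ∑ j : Fin N, if G.Adj i j then (x i - x j)^2 else 0) / 2 := by
    rw [show lapR' G = G.lapMatrix ℝ from rfl, ← Matrix.toLinearMap₂'_apply',
      SimpleGraph.lapMatrix_toLinearMap₂']
  have hH : x ⬝ᵥ (lapR' H *ᵥ x)
      = (∑ i : Fin N, ∑ j : Fin N, if H.Adj i j then (x i - x j)^2 else 0) / 2 := by
    rw [show lapR' H = H.lapMatrix ℝ from rfl, ← Matrix.toLinearMap₂'_apply',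
      SimpleGraph.lapMatrix_toLinearMap₂']
  rw [hG, hH]
  have hsum : (∑ i : Fin N, ∑ j : Fin N, if G.Adj i j then (x i - x j)^2 else 0)
      ≤ ∑ i : Fin N, ∑ j : Fin N, if H.Adj i j then (x i - x j)^2 else 0 := by
    apply Finset.sum_le_sum
    intro i _
    apply Finset.sum_le_sum
    intro j _
    by_cases h : G.Adj i j
    · rw [if_pos h, if_pos (hGH h)]
    · rw [if_neg h]
      split
      · positivity
      · exact le_refl 0
  linarith

lemma mulVec_allOnes (x : Fin N → ℝ) :
    ((Matrix.of (fun _ _ => (1:ℝ)) : Matrix (Fin N) (Fin N) ℝ) *ᵥ x) = fun _ => ∑ j, x j := by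
  ext i
  simp [Matrix.mulVec, dotProduct]

lemma lap_add_lap_compl (G : SimpleGraph (Fin N)) :
    lapR' G + lapR' Gᶜ = (N:ℝ) • (1 : Matrix (Fin N) (Fin N) ℝ)
      - (Matrix.of (fun _ _ => (1:ℝ)) : Matrix (Fin N) (Fin N) ℝ) := by
  letI instG := Classical.decRel G.Adj
  letI instGc := Classical.decRel Gᶜ.Adj
  show G.lapMatrix ℝ + Gᶜ.lapMatrix ℝ = _
  ext i j
  simp only [Matrix.add_apply, Matrix.sub_apply, Matrix.smul_apply, Matrix.of_apply,
    smul_eq_mul, SimpleGraph.lapMatrix, SimpleGraph.degMatrix, SimpleGraph.adjMatrix_apply]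
  by_cases hij : i = j
  · subst hij
    rw [Matrix.diagonal_apply_eq, Matrix.diagonal_apply_eq, Matrix.one_apply_eq]
    have h1 : ¬ G.Adj i i := G.irrefl
    have h2 : ¬ Gᶜ.Adj i i := Gᶜ.irrefl
    rw [if_neg h1, if_neg h2]
    have hdG := SimpleGraph.degree_eq_sum_if_adj (R := ℝ) G i
    have hdGc := SimpleGraph.degree_eq_sum_if_adj (R := ℝ) Gᶜ i
    rw [hdG, hdGc]
    have key : ∀ j : Fin N, ((if G.Adj i j then (1:ℝ) else 0) + if Gᶜ.Adj i j then (1:ℝ) else 0)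
        = if i = j then 0 else 1 := by
      intro j
      by_cases h : i = j
      · subst h
        rw [if_neg (G.irrefl), if_neg (Gᶜ.irrefl), if_pos rfl]
        ring
      · rw [if_neg h]
        by_cases hadj : G.Adj i j
        · have : ¬ Gᶜ.Adj i j := by simp [SimpleGraph.compl_adj, hadj]
          rw [if_pos hadj, if_neg this]; ring
        · have : Gᶜ.Adj i j := ⟨h, hadj⟩
          rw [if_neg hadj, if_pos this]; ring
    rw [sub_zero, sub_zero, ← Finset.sum_add_distrib]
    simp_rw [key]
    have hrw : (∑ x : Fin N, if i = x then (0:ℝ) else 1)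
        = ∑ x : Fin N, ((1:ℝ) - if i = x then (1:ℝ) else 0) := by
      apply Finset.sum_congr rfl
      intro x _
      by_cases h : i = x <;> simp [h]
    rw [hrw, Finset.sum_sub_distrib, Finset.sum_const, Finset.sum_ite_eq]
    simp
  · rw [Matrix.diagonal_apply_ne _ hij, Matrix.diagonal_apply_ne _ hij,
      Matrix.one_apply_ne hij]
    by_cases hadj : G.Adj i j
    · have : ¬ Gᶜ.Adj i j := by simp [SimpleGraph.compl_adj, hadj]
      rw [if_pos hadj, if_neg this]; ring
    · have : Gᶜ.Adj i j := ⟨hij, hadj⟩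
      rw [if_neg hadj, if_pos this]; ring

end GraphLemmas

section Spectral
variable {N : ℕ}

noncomputable def eigsR (G : SimpleGraph (Fin N)) : Fin N → ℝ :=
  (lapR'_posSemidef G).isHermitian.eigenvalues

noncomputable def evecR (G : SimpleGraph (Fin N)) :=
  (lapR'_posSemidef G).isHermitian.eigenvectorBasis

lemma eigsR_nonneg (G : SimpleGraph (Fin N)) (i : Fin N) : 0 ≤ eigsR G i :=
  (lapR'_posSemidef G).eigenvalues_nonneg i

lemma lap_mulVec_ones (G : SimpleGraph (Fin N)) :
    lapR' G *ᵥ (fun _ => (1:ℝ)) = 0 := by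
  letI := Classical.decRel G.Adj
  show G.lapMatrix ℝ *ᵥ (fun _ => (1:ℝ)) = 0
  exact SimpleGraph.lapMatrix_mulVec_const_eq_zero (R := ℝ) (G := G)

lemma ones_ne_zero (hN : 0 < N) : (fun _ => (1:ℝ)) ≠ (0 : Fin N → ℝ) := by
  intro h
  have := congr_fun h ⟨0, hN⟩
  simp at this

lemma exists_eigsR_zero (G : SimpleGraph (Fin N)) (hN : 0 < N) :
    ∃ i, eigsR G i = 0 := by
  apply exists_eig_index (lapR'_posSemidef G).isHermitian (ones_ne_zero hN)
  rw [lap_mulVec_ones]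
  simp

lemma eigsR_le_N (G : SimpleGraph (Fin N)) (i : Fin N) : eigsR G i ≤ N := by
  set hA := (lapR'_posSemidef G).isHermitian
  set v : Fin N → ℝ := ⇑(hA.eigenvectorBasis i) with hv
  have hnorm : v ⬝ᵥ v = 1 := by
    have h1 : ‖hA.eigenvectorBasis i‖ = 1 := hA.eigenvectorBasis.orthonormal.1 i
    have h2 : (inner ℝ (hA.eigenvectorBasis i) (hA.eigenvectorBasis i) : ℝ) = 1 := by
      rw [real_inner_self_eq_norm_sq, h1]; norm_num
    rw [euc_inner_eq_dot] at h2
    exact h2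
  have heig : lapR' G *ᵥ v = eigsR G i • v := hA.mulVec_eigenvectorBasis i
  have hdecomp : lapR' G = (N:ℝ) • (1 : Matrix (Fin N) (Fin N) ℝ)
      - (Matrix.of (fun _ _ => (1:ℝ)) : Matrix (Fin N) (Fin N) ℝ) - lapR' Gᶜ := by
    have := lap_add_lap_compl G
    rw [← this, add_sub_cancel_right]
  have hval : eigsR G i = v ⬝ᵥ (lapR' G *ᵥ v) := by
    rw [heig, dotProduct_smul, hnorm]; simp
  have hJ : v ⬝ᵥ ((Matrix.of (fun _ _ => (1:ℝ)) : Matrix (Fin N) (Fin N) ℝ) *ᵥ v)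
      = (∑ j, v j)^2 := by
    rw [mulVec_allOnes]
    simp [dotProduct, Finset.sum_mul, sq]
  have hq := quad_nonneg Gᶜ v
  have hNv : v ⬝ᵥ (((N:ℝ) • (1 : Matrix (Fin N) (Fin N) ℝ)) *ᵥ v) = N := by
    rw [Matrix.smul_mulVec, Matrix.one_mulVec, dotProduct_smul, hnorm]
    simp
  have hsq : 0 ≤ (∑ j, v j)^2 := sq_nonneg _
  rw [hval, hdecomp]
  rw [Matrix.sub_mulVec, Matrix.sub_mulVec, dotProduct_sub, dotProduct_sub,
    hNv, hJ]
  linarith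

end Spectral

section Kernel
variable {N : ℕ}

lemma ones_mem_ker (G : SimpleGraph (Fin N)) :
    (fun _ => (1:ℝ)) ∈ LinearMap.ker (Matrix.toLin' (lapR' G)) := by
  rw [LinearMap.mem_ker, Matrix.toLin'_apply, lap_mulVec_ones]

lemma card_cc_eq_finrank (G : SimpleGraph (Fin N)) [Fintype G.ConnectedComponent] :
    Fintype.card G.ConnectedComponent
      = Module.finrank ℝ (LinearMap.ker (Matrix.toLin' (lapR' G))) := by
  letI := Classical.decRel G.Adj
  rw [show lapR' G = G.lapMatrix ℝ from rfl]
  convert G.card_connectedComponent_eq_finrank_ker_toLin'_lapMatrix using 2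

lemma two_le_card_cc {G : SimpleGraph (Fin N)} (hN : 0 < N) (h : ¬ G.Connected)
    [Fintype G.ConnectedComponent] : 2 ≤ Fintype.card G.ConnectedComponent := by
  by_contra hlt
  push_neg at hlt
  have hsub : Subsingleton G.ConnectedComponent :=
    Fintype.card_le_one_iff_subsingleton.mp (by omega)
  apply h
  rw [SimpleGraph.connected_iff]
  refine ⟨?_, ⟨⟨0, hN⟩⟩⟩
  intro a b
  have : G.connectedComponentMk a = G.connectedComponentMk b := Subsingleton.elim _ _
  exact (SimpleGraph.ConnectedComponent.eq).mp this

lemma ker_eq_span_of_connected {G : SimpleGraph (Fin N)} (hG : G.Connected) :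
    LinearMap.ker (Matrix.toLin' (lapR' G))
      = Submodule.span ℝ {(fun _ => (1:ℝ) : Fin N → ℝ)} := by
  classical
  have hN : 0 < N := by
    rcases hG.nonempty with ⟨v⟩
    exact v.pos
  have hcard : Fintype.card G.ConnectedComponent = 1 := by
    rcases hG.nonempty with ⟨v⟩
    rw [Fintype.card_eq_one_iff]
    refine ⟨G.connectedComponentMk v, ?_⟩
    intro c
    induction c using SimpleGraph.ConnectedComponent.ind with
    | _ w => exact SimpleGraph.ConnectedComponent.eq.mpr (hG.preconnected w v)
  have hfin : Module.finrank ℝ (LinearMap.ker (Matrix.toLin' (lapR' G))) = 1 := by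
    rw [← card_cc_eq_finrank G, hcard]
  have hle : Submodule.span ℝ {(fun _ => (1:ℝ) : Fin N → ℝ)}
      ≤ LinearMap.ker (Matrix.toLin' (lapR' G)) := by
    rw [Submodule.span_le, Set.singleton_subset_iff]
    exact ones_mem_ker G
  symm
  apply Submodule.eq_of_le_of_finrank_le hle
  rw [hfin, finrank_span_singleton (ones_ne_zero hN)]

lemma exists_ker_not_span {G : SimpleGraph (Fin N)} (hN : 0 < N) (h : ¬ G.Connected) :
    ∃ y : Fin N → ℝ, y ∈ LinearMap.ker (Matrix.toLin' (lapR' G)) ∧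
      y ∉ Submodule.span ℝ {(fun _ => (1:ℝ) : Fin N → ℝ)} := by
  classical
  by_contra hc
  push_neg at hc
  have hle : LinearMap.ker (Matrix.toLin' (lapR' G))
      ≤ Submodule.span ℝ {(fun _ => (1:ℝ) : Fin N → ℝ)} := fun y hy => hc y hy
  have h2 := two_le_card_cc hN h (G := G)
  rw [card_cc_eq_finrank G] at h2
  have hfr : Module.finrank ℝ (LinearMap.ker (Matrix.toLin' (lapR' G)))
      ≤ Module.finrank ℝ (Submodule.span ℝ {(fun _ => (1:ℝ) : Fin N → ℝ)}) :=
    Submodule.finrank_mono hle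
  rw [finrank_span_singleton (ones_ne_zero hN)] at hfr
  omega

lemma exists_eigsR_N {G : SimpleGraph (Fin N)} (hN : 0 < N) (hGc : ¬ Gᶜ.Connected) :
    ∃ i, eigsR G i = N := by
  obtain ⟨y, hyker, hyspan⟩ := exists_ker_not_span hN hGc
  set c : ℝ := (∑ j, y j) / N with hc
  set x : Fin N → ℝ := y - c • (fun _ => (1:ℝ)) with hx
  have hx0 : x ≠ 0 := by
    intro h0
    apply hyspan
    have : y = c • (fun _ => (1:ℝ)) := by
      have := sub_eq_zero.mp h0
      exact this
    rw [this]
    exact Submodule.smul_mem _ _ (Submodule.mem_span_singleton_self _)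
  have hsum : ∑ j, x j = 0 := by
    simp only [hx, Pi.sub_apply, Pi.smul_apply, smul_eq_mul, mul_one]
    rw [Finset.sum_sub_distrib, Finset.sum_const, hc]
    simp only [Finset.card_univ, Fintype.card_fin, nsmul_eq_mul]
    have : (N:ℝ) ≠ 0 := Nat.cast_ne_zero.mpr hN.ne'
    field_simp
    ring
  have hkerx : lapR' Gᶜ *ᵥ x = 0 := by
    have h1 : lapR' Gᶜ *ᵥ y = 0 := by
      rw [← Matrix.toLin'_apply]; exact hyker
    have h2 : lapR' Gᶜ *ᵥ (fun _ => (1:ℝ)) = 0 := lap_mulVec_ones Gᶜ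
    rw [hx, Matrix.mulVec_sub, h1, Matrix.mulVec_smul, h2]
    simp
  have heig : lapR' G *ᵥ x = (N:ℝ) • x := by
    have hdecomp : lapR' G = (N:ℝ) • (1 : Matrix (Fin N) (Fin N) ℝ)
        - (Matrix.of (fun _ _ => (1:ℝ)) : Matrix (Fin N) (Fin N) ℝ) - lapR' Gᶜ := by
      rw [← lap_add_lap_compl G, add_sub_cancel_right]
    rw [hdecomp, Matrix.sub_mulVec, Matrix.sub_mulVec, hkerx, sub_zero,
      Matrix.smul_mulVec, Matrix.one_mulVec, mulVec_allOnes, hsum]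
    rw [show ((fun _ => (0:ℝ)) : Fin N → ℝ) = 0 from rfl, sub_zero]
  exact exists_eig_index (lapR'_posSemidef G).isHermitian hx0 heig

end Kernel

lemma one_lt_of_two_le' {N : ℕ} (hN : 2 ≤ N) : 1 < N := by omega

section Sorted
variable {N : ℕ}

noncomputable def sorted' (G : SimpleGraph (Fin N)) : Fin N → ℝ :=
  eigsR G ∘ Tuple.sort (eigsR G)

lemma sorted'_mono (G : SimpleGraph (Fin N)) : Monotone (sorted' G) :=
  Tuple.monotone_sort (eigsR G)

lemma sorted'_nonneg (G : SimpleGraph (Fin N)) (k : Fin N) : 0 ≤ sorted' G k :=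
  eigsR_nonneg G _

lemma sorted'_zero (G : SimpleGraph (Fin N)) (hN : 0 < N) :
    sorted' G ⟨0, hN⟩ = 0 := by
  obtain ⟨i, hi⟩ := exists_eigsR_zero G hN
  have h1 : sorted' G ((Tuple.sort (eigsR G)).symm i) = 0 := by
    simp only [sorted', Function.comp_apply, Equiv.apply_symm_apply, hi]
  have h2 : sorted' G ⟨0, hN⟩ ≤ sorted' G ((Tuple.sort (eigsR G)).symm i) :=
    sorted'_mono G (by exact Fin.mk_le_of_le_val (Nat.zero_le _))
  have h3 := sorted'_nonneg G ⟨0, hN⟩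
  linarith

lemma sorted'_max {G : SimpleGraph (Fin N)} (hN : 0 < N) (hex : ∃ i, eigsR G i = N) :
    sorted' G ⟨N - 1, by omega⟩ = N := by
  obtain ⟨i, hi⟩ := hex
  have h1 : sorted' G ((Tuple.sort (eigsR G)).symm i) = N := by
    simp only [sorted', Function.comp_apply, Equiv.apply_symm_apply, hi]
  have h2 : sorted' G ((Tuple.sort (eigsR G)).symm i) ≤ sorted' G ⟨N - 1, by omega⟩ := by
    apply sorted'_mono G
    rw [Fin.le_def]
    have := ((Tuple.sort (eigsR G)).symm i).isLt
    simp only []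
    omega
  have h3 := eigsR_le_N G (Tuple.sort (eigsR G) ⟨N - 1, by omega⟩)
  have h4 : sorted' G ⟨N - 1, by omega⟩ ≤ N := h3
  linarith

lemma eig_zero_unique {G : SimpleGraph (Fin N)} (hG : G.Connected) {i j : Fin N}
    (hi : eigsR G i = 0) (hj : eigsR G j = 0) : i = j := by
  have hN : 0 < N := by rcases hG.nonempty with ⟨v⟩; exact v.pos
  by_contra hij
  set hA := (lapR'_posSemidef G).isHermitian
  have hmem : ∀ k, eigsR G k = 0 →
      (⇑(hA.eigenvectorBasis k) : Fin N → ℝ) ∈ Submodule.span ℝ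
        {(fun _ => (1:ℝ) : Fin N → ℝ)} := by
    intro k hk
    rw [← ker_eq_span_of_connected hG, LinearMap.mem_ker, Matrix.toLin'_apply]
    have := hA.mulVec_eigenvectorBasis k
    rw [this]
    show eigsR G k • _ = _
    rw [hk, zero_smul]
  obtain ⟨a, ha⟩ := Submodule.mem_span_singleton.mp (hmem i hi)
  obtain ⟨b, hb⟩ := Submodule.mem_span_singleton.mp (hmem j hj)
  have horth : (inner ℝ (hA.eigenvectorBasis i) (hA.eigenvectorBasis j) : ℝ) = 0 :=
    hA.eigenvectorBasis.orthonormal.2 hij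
  rw [euc_inner_eq_dot] at horth
  rw [← ha, ← hb] at horth
  have hdot : (a • (fun _ => (1:ℝ) : Fin N → ℝ)) ⬝ᵥ (b • (fun _ => (1:ℝ) : Fin N → ℝ))
      = a * b * N := by
    simp [dotProduct, Finset.mul_sum, mul_comm, mul_assoc]
  rw [hdot] at horth
  have hane : a ≠ 0 := by
    intro h0
    apply hA.eigenvectorBasis.orthonormal.ne_zero i
    have : (⇑(hA.eigenvectorBasis i) : Fin N → ℝ) = 0 := by rw [← ha, h0, zero_smul]
    exact (WithLp.equiv 2 _).injective (by first | simpa using this | simp [this] | exact this)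
  have hbne : b ≠ 0 := by
    intro h0
    apply hA.eigenvectorBasis.orthonormal.ne_zero j
    have : (⇑(hA.eigenvectorBasis j) : Fin N → ℝ) = 0 := by rw [← hb, h0, zero_smul]
    exact (WithLp.equiv 2 _).injective (by first | simpa using this | simp [this] | exact this)
  have hNne : (N:ℝ) ≠ 0 := Nat.cast_ne_zero.mpr hN.ne'
  rcases mul_eq_zero.mp horth with h' | h'
  · rcases mul_eq_zero.mp h' with h'' | h''
    · exact hane h''
    · exact hbne h''
  · exact hNne h'

lemma sorted'_one_pos {G : SimpleGraph (Fin N)} (hN : 2 ≤ N) (hG : G.Connected) :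
    0 < sorted' G ⟨1, one_lt_of_two_le' hN⟩ := by
  rcases lt_or_eq_of_le (sorted'_nonneg G ⟨1, by omega⟩) with h | h
  · exact h
  exfalso
  have h0 : sorted' G ⟨0, by omega⟩ = 0 := sorted'_zero G (by omega)
  have hi : eigsR G (Tuple.sort (eigsR G) ⟨0, by omega⟩) = 0 := h0
  have hj : eigsR G (Tuple.sort (eigsR G) ⟨1, by omega⟩) = 0 := h.symm
  have := eig_zero_unique hG hi hj
  have h01 : (⟨0, by omega⟩ : Fin N) = ⟨1, by omega⟩ := (Tuple.sort (eigsR G)).injective this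
  simp at h01

end Sorted

section Rayleigh
variable {N : ℕ}

lemma exists_eigvec_one {G : SimpleGraph (Fin N)} (hN : 2 ≤ N) (hG : G.Connected) :
    ∃ x : Fin N → ℝ, x ≠ 0 ∧ (∑ j, x j) = 0 ∧
      lapR' G *ᵥ x = (sorted' G ⟨1, one_lt_of_two_le' hN⟩) • x := by
  set hA := (lapR'_posSemidef G).isHermitian
  set i := Tuple.sort (eigsR G) ⟨1, by omega⟩ with hi
  refine ⟨⇑(hA.eigenvectorBasis i), ?_, ?_, ?_⟩
  · intro h0
    apply hA.eigenvectorBasis.orthonormal.ne_zero i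
    exact (WithLp.equiv 2 _).injective (by first | simpa using h0 | exact h0)
  · set c := sorted' G ⟨1, by omega⟩ with hc
    have hcpos : 0 < c := sorted'_one_pos hN hG
    set x : Fin N → ℝ := ⇑(hA.eigenvectorBasis i) with hx
    have heig : lapR' G *ᵥ x = c • x := hA.mulVec_eigenvectorBasis i
    have h1 : (fun _ => (1:ℝ)) ⬝ᵥ (lapR' G *ᵥ x) = 0 := by
      rw [dot_symm_herm hA (fun _ => (1:ℝ)) x, lap_mulVec_ones]
      simp
    rw [heig, dotProduct_smul] at h1
    have h2 : (fun _ => (1:ℝ)) ⬝ᵥ x = ∑ j, x j := by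
      simp [dotProduct]
    rw [h2] at h1
    have := smul_eq_zero.mp h1
    rcases this with h | h
    · exact absurd h hcpos.ne'
    · exact h
  · exact hA.mulVec_eigenvectorBasis i

lemma rayleigh_lower {G : SimpleGraph (Fin N)} (hN : 2 ≤ N) (hG : G.Connected)
    {x : Fin N → ℝ} (hx : x ≠ 0) (hsum : ∑ j, x j = 0) :
    sorted' G ⟨1, one_lt_of_two_le' hN⟩ * (x ⬝ᵥ x) ≤ x ⬝ᵥ (lapR' G *ᵥ x) := by
  set hA := (lapR'_posSemidef G).isHermitian with hhA
  set i₀ := Tuple.sort (eigsR G) ⟨0, by omega⟩ with hi₀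
  set c : Fin N → ℝ := fun i => (⇑(hA.eigenvectorBasis i) : Fin N → ℝ) ⬝ᵥ x with hcdef
  set s1 := sorted' G ⟨1, by omega⟩ with hs1
  have hc0 : c i₀ = 0 := by
    have hmu : eigsR G i₀ = 0 := sorted'_zero G (by omega)
    have hker : (⇑(hA.eigenvectorBasis i₀) : Fin N → ℝ) ∈ Submodule.span ℝ
        {(fun _ => (1:ℝ) : Fin N → ℝ)} := by
      rw [← ker_eq_span_of_connected hG, LinearMap.mem_ker, Matrix.toLin'_apply]
      have := hA.mulVec_eigenvectorBasis i₀
      rw [this]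
      show eigsR G i₀ • _ = _
      rw [hmu, zero_smul]
    obtain ⟨a, ha⟩ := Submodule.mem_span_singleton.mp hker
    rw [hcdef]
    simp only
    rw [← ha]
    have : (a • (fun _ => (1:ℝ) : Fin N → ℝ)) ⬝ᵥ x = a * ∑ j, x j := by
      simp [dotProduct, Finset.mul_sum]
    rw [this, hsum, mul_zero]
  have hge : ∀ i, i ≠ i₀ → s1 ≤ eigsR G i := by
    intro i hi
    set k := (Tuple.sort (eigsR G)).symm i with hk
    have hkne : k ≠ ⟨0, by omega⟩ := by
      intro h0
      apply hi
      rw [hi₀, ← h0, hk]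
      simp
    have h1k : (⟨1, by omega⟩ : Fin N) ≤ k := by
      rw [Fin.le_def]
      have : k.val ≠ 0 := fun h => hkne (Fin.ext h)
      simp only []
      omega
    have := sorted'_mono G h1k
    rw [hs1]
    calc sorted' G ⟨1, by omega⟩ ≤ sorted' G k := this
      _ = eigsR G i := by rw [sorted', Function.comp_apply, hk]; simp
  have hquad : x ⬝ᵥ (lapR' G *ᵥ x) = ∑ i, eigsR G i * (c i)^2 :=
    quad_form_expand hA x
  have hnorm : x ⬝ᵥ x = ∑ i, (c i)^2 := norm_expand hA x
  rw [hquad, hnorm]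
  have hsplit : ∑ i, eigsR G i * (c i)^2 = ∑ i ∈ Finset.univ.erase i₀, eigsR G i * (c i)^2 := by
    rw [← Finset.add_sum_erase Finset.univ _ (Finset.mem_univ i₀), hc0]
    ring
  have hsplit2 : ∑ i, (c i)^2 = ∑ i ∈ Finset.univ.erase i₀, (c i)^2 := by
    rw [← Finset.add_sum_erase Finset.univ _ (Finset.mem_univ i₀), hc0]
    ring
  rw [hsplit, hsplit2, Finset.mul_sum]
  apply Finset.sum_le_sum
  intro i hi
  have := hge i (Finset.ne_of_mem_erase hi)
  have hc2 : 0 ≤ (c i)^2 := sq_nonneg _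
  nlinarith

end Rayleigh

/-- If `G` is connected on `N ≥ 2` vertices with disconnected complement,
then after adding any missing edge `e`, the complement of `G + e` is still disconnected,
the largest Laplacian eigenvalue stays equal to `N`, the second smallest Laplacian
eigenvalue does not decrease, and hence the eigenratio does not decrease. -/
theorem addEdge_of_disconnected_compl {N : ℕ} (hN : 2 ≤ N) (G : SimpleGraph (Fin N))
    (hG : G.Connected) (hGc : ¬ Gᶜ.Connected)
    (u v : Fin N) (huv : u ≠ v) (hadj : ¬ G.Adj u v) :
    ¬ (G ⊔ SimpleGraph.edge u v)ᶜ.Connected ∧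
    sortedLapEigs (G ⊔ SimpleGraph.edge u v) ⟨N - 1, by omega⟩ = N ∧
    sortedLapEigs G ⟨N - 1, by omega⟩ = N ∧
    sortedLapEigs G ⟨1, by omega⟩ ≤
      sortedLapEigs (G ⊔ SimpleGraph.edge u v) ⟨1, by omega⟩ ∧
    sortedLapEigs G ⟨1, by omega⟩ / sortedLapEigs G ⟨N - 1, by omega⟩ ≤
      sortedLapEigs (G ⊔ SimpleGraph.edge u v) ⟨1, by omega⟩ /
        sortedLapEigs (G ⊔ SimpleGraph.edge u v) ⟨N - 1, by omega⟩ := by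
  have hN0 : 0 < N := by omega
  set H := G ⊔ SimpleGraph.edge u v with hH
  have hGH : G ≤ H := le_sup_left
  have hHconn : H.Connected := hG.mono hGH
  have hcompl_le : Hᶜ ≤ Gᶜ := by
    intro a b hab
    exact ⟨hab.1, fun h => hab.2 (hGH h)⟩
  have hHc : ¬ Hᶜ.Connected := fun h => hGc (h.mono hcompl_le)
  have hsorted : ∀ (K : SimpleGraph (Fin N)), sortedLapEigs K = sorted' K := fun K => rfl
  have hmaxG : sortedLapEigs G ⟨N - 1, by omega⟩ = N := by
    rw [hsorted]
    exact sorted'_max hN0 (exists_eigsR_N hN0 hGc)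
  have hmaxH : sortedLapEigs H ⟨N - 1, by omega⟩ = N := by
    rw [hsorted]
    exact sorted'_max hN0 (exists_eigsR_N hN0 hHc)
  have hlam2 : sortedLapEigs G ⟨1, by omega⟩ ≤ sortedLapEigs H ⟨1, by omega⟩ := by
    rw [hsorted, hsorted]
    obtain ⟨x, hx0, hxsum, hxeig⟩ := exists_eigvec_one hN hHconn
    have h1 : sorted' G ⟨1, by omega⟩ * (x ⬝ᵥ x) ≤ x ⬝ᵥ (lapR' G *ᵥ x) :=
      rayleigh_lower hN hG hx0 hxsum
    have h2 : x ⬝ᵥ (lapR' G *ᵥ x) ≤ x ⬝ᵥ (lapR' H *ᵥ x) := quad_mono hGH x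
    have h3 : x ⬝ᵥ (lapR' H *ᵥ x) = sorted' H ⟨1, by omega⟩ * (x ⬝ᵥ x) := by
      rw [hxeig, dotProduct_smul]
      simp
    have hpos : 0 < x ⬝ᵥ x := dot_self_pos hx0
    have := h1.trans (h2.trans_eq h3)
    exact le_of_mul_le_mul_right this hpos
  refine ⟨hHc, hmaxH, hmaxG, hlam2, ?_⟩
  rw [hmaxG, hmaxH]
  have hNpos : (0:ℝ) < N := by exact_mod_cast hN0
  exact (div_le_div_iff_of_pos_right hNpos).mpr hlam2
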